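/- The W_n-module Ω(Λ_n, a) is simple if and only if a ≠ -1. -/

import Mathlib

open MvPolynomial

/-- The action of `t^k ∂_i` (`k ∈ ℤ^n`) on `Ω(Λ_n, a) = ℂ[x_1,...,x_n]`. -/
noncomputable def omegaNAct {n : ℕ} (Λ : Fin n → ℂ) (a : ℂ)
    (i : Fin n) (k : Fin n → ℤ) (f : MvPolynomial (Fin n) ℂ) :
    MvPolynomial (Fin n) ℂ :=
  (∏ j, Λ j ^ (k j)) •
    ((X i - C ((k i : ℂ) * (a + 1))) * aeval (fun j => X j - C ((k j : ℂ))) f)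

-- Vandermonde membership lemma
lemma coeff_mem_of_eval_mem {n : ℕ} (N : Submodule ℂ (MvPolynomial (Fin n) ℂ))
    (Q : Polynomial (MvPolynomial (Fin n) ℂ))
    (h : ∀ m : ℕ, Q.eval (C (m : ℂ)) ∈ N) (e : ℕ) : Q.coeff e ∈ N := by
  by_cases he : e < Q.natDegree + 1
  · set D := Q.natDegree + 1 with hD
    have key : ∀ m : ℕ, (∑ j : Fin D, ((m : ℂ) ^ (j : ℕ)) • Q.coeff j) ∈ N := by
      intro m
      have hm := h m
      rw [Polynomial.eval_eq_sum_range, Finset.sum_range] at hm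
      convert hm using 2 with j
      rw [smul_eq_C_mul, map_pow, mul_comm]
    set v : Fin D → ℂ := fun j => ((j : ℕ) : ℂ) with hv
    have hdet : (Matrix.vandermonde v).det ≠ 0 := by
      rw [Matrix.det_vandermonde]
      apply Finset.prod_ne_zero_iff.2
      intro i _
      apply Finset.prod_ne_zero_iff.2
      intro j hj
      have hij : (i : ℕ) < (j : ℕ) := Fin.lt_iff_val_lt_val.mp (Finset.mem_Ioi.mp hj)
      have : v j ≠ v i := by
        simp only [hv, ne_eq, Nat.cast_inj]
        omega
      exact sub_ne_zero.2 this
    have hVV : (Matrix.vandermonde v)⁻¹ * Matrix.vandermonde v = 1 :=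
      Matrix.nonsing_inv_mul _ (Ne.isUnit hdet)
    have hrw : Q.coeff e = ∑ m : Fin D, (Matrix.vandermonde v)⁻¹ ⟨e, he⟩ m •
        (∑ j : Fin D, ((m : ℕ) : ℂ) ^ (j : ℕ) • Q.coeff j) := by
      have : ∀ m j : Fin D, ((m : ℕ) : ℂ) ^ (j : ℕ) = Matrix.vandermonde v m j := by
        intro m j; rw [Matrix.vandermonde_apply]
      calc Q.coeff e = ∑ j : Fin D, (1 : Matrix (Fin D) (Fin D) ℂ) ⟨e, he⟩ j • Q.coeff j := by
            simp [Matrix.one_apply]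
        _ = ∑ j : Fin D, ((Matrix.vandermonde v)⁻¹ * Matrix.vandermonde v) ⟨e, he⟩ j • Q.coeff j := by
            rw [hVV]
        _ = ∑ j : Fin D, (∑ m : Fin D, (Matrix.vandermonde v)⁻¹ ⟨e, he⟩ m * Matrix.vandermonde v m j) • Q.coeff j := by
            simp [Matrix.mul_apply]
        _ = ∑ j : Fin D, ∑ m : Fin D, ((Matrix.vandermonde v)⁻¹ ⟨e, he⟩ m * Matrix.vandermonde v m j) • Q.coeff j := by
            simp [Finset.sum_smul]
        _ = ∑ m : Fin D, ∑ j : Fin D, ((Matrix.vandermonde v)⁻¹ ⟨e, he⟩ m * Matrix.vandermonde v m j) • Q.coeff j := by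
            rw [Finset.sum_comm]
        _ = _ := by
            refine Finset.sum_congr rfl fun m _ => ?_
            rw [Finset.smul_sum]
            refine Finset.sum_congr rfl fun j _ => ?_
            rw [this m j, smul_smul]
    rw [hrw]
    exact Submodule.sum_mem _ fun m _ => Submodule.smul_mem _ _ (key m)
  · rw [Polynomial.coeff_eq_zero_of_natDegree_lt (by omega)]
    exact N.zero_mem

noncomputable section
variable {m : ℕ} (i : Fin (m + 1))

/-- rename by the swap `i ↔ 0`. -/
def swapHom (i : Fin (m+1)) : MvPolynomial (Fin (m+1)) ℂ →ₐ[ℂ] MvPolynomial (Fin (m+1)) ℂ :=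
  rename (Equiv.swap i 0)

/-- embed coefficients back -/
def embHom (i : Fin (m+1)) : Polynomial (MvPolynomial (Fin m) ℂ) →ₐ[ℂ] Polynomial (MvPolynomial (Fin (m+1)) ℂ) :=
  Polynomial.mapAlgHom (rename (fun j : Fin m => Equiv.swap i 0 j.succ))

def qPoly (i : Fin (m+1)) : Polynomial (MvPolynomial (Fin (m+1)) ℂ) :=
  Polynomial.C (X i) - Polynomial.X

/-- composition with q as ℂ-algebra hom -/
def compHom (i : Fin (m+1)) : Polynomial (MvPolynomial (Fin (m+1)) ℂ) →ₐ[ℂ] Polynomial (MvPolynomial (Fin (m+1)) ℂ) :=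
  (Polynomial.aeval (qPoly i)).restrictScalars ℂ

def Phi (i : Fin (m+1)) : MvPolynomial (Fin (m+1)) ℂ →ₐ[ℂ] Polynomial (MvPolynomial (Fin (m+1)) ℂ) :=
  (compHom i).comp ((embHom i).comp ((finSuccEquiv ℂ m).toAlgHom.comp (swapHom i)))

lemma compHom_apply (p : Polynomial (MvPolynomial (Fin (m+1)) ℂ)) :
    compHom i p = p.comp (qPoly i) := by
  rw [compHom, AlgHom.coe_restrictScalars', Polynomial.comp_eq_aeval]

lemma Phi_X (j : Fin (m+1)) :
    Phi i (X j) = if j = i then Polynomial.C (X i) - Polynomial.X else Polynomial.C (X j) := by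
  simp only [Phi, AlgHom.comp_apply, swapHom]
  by_cases hj : j = i
  · subst hj
    rw [rename_X, Equiv.swap_apply_left]
    simp only [AlgEquiv.toAlgHom_eq_coe, AlgHom.coe_coe, AlgEquiv.coe_toAlgHom, finSuccEquiv_X_zero]
    rw [embHom]
    simp only [Polynomial.coe_mapAlgHom, Polynomial.map_X, compHom_apply, Polynomial.X_comp,
      qPoly]
    simp
  · have h0 : Equiv.swap i 0 j ≠ 0 := by
      intro hc
      exact hj (by simpa using congrArg (Equiv.swap i 0) hc)
    rw [rename_X]
    have : X (Equiv.swap i 0 j) =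
        (X ((Equiv.swap i 0 j).pred h0).succ : MvPolynomial (Fin (m+1)) ℂ) := by
      rw [Fin.succ_pred]
    rw [this]
    simp only [AlgEquiv.toAlgHom_eq_coe, AlgHom.coe_coe, AlgEquiv.coe_toAlgHom, finSuccEquiv_X_succ]
    rw [embHom]
    simp only [Polynomial.coe_mapAlgHom, Polynomial.map_C, rename_X, Fin.succ_pred,
      Equiv.swap_apply_self, compHom_apply, Polynomial.C_comp, if_neg hj]
    simp only [RingHom.coe_coe, rename_X, Fin.succ_pred, Equiv.swap_apply_self]

def Gpoly (i : Fin (m+1)) (f : MvPolynomial (Fin (m+1)) ℂ) : Polynomial (MvPolynomial (Fin m) ℂ) :=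
  finSuccEquiv ℂ m (swapHom i f)

lemma Gpoly_natDegree (f : MvPolynomial (Fin (m+1)) ℂ) :
    (Gpoly i f).natDegree = degreeOf i f := by
  rw [Gpoly, natDegree_finSuccEquiv, swapHom]
  have := degreeOf_rename_of_injective (p := f) (Equiv.swap i 0).injective i
  rwa [Equiv.swap_apply_left] at this

lemma Gpoly_ne_zero {f : MvPolynomial (Fin (m+1)) ℂ} (hf : f ≠ 0) : Gpoly i f ≠ 0 := by
  rw [Gpoly]
  intro hc
  apply hf
  have h1 : swapHom i f = 0 := (finSuccEquiv ℂ m).injective (by simpa using hc)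
  exact rename_injective _ (Equiv.swap i 0).injective (by simpa [swapHom] using h1)

lemma qPoly_natDegree : (qPoly i).natDegree = 1 := by
  rw [qPoly, show (Polynomial.C (X i) - Polynomial.X : Polynomial (MvPolynomial (Fin (m+1)) ℂ))
    = -(Polynomial.X - Polynomial.C (X i)) by ring, Polynomial.natDegree_neg,
    Polynomial.natDegree_X_sub_C]

lemma qPoly_leadingCoeff : (qPoly i).leadingCoeff = -1 := by
  rw [qPoly, show (Polynomial.C (X i) - Polynomial.X : Polynomial (MvPolynomial (Fin (m+1)) ℂ))
    = -(Polynomial.X - Polynomial.C (X i)) by ring, Polynomial.leadingCoeff_neg,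
    (Polynomial.monic_X_sub_C _).leadingCoeff]

lemma qPoly_comp : (qPoly i).comp (qPoly i) = Polynomial.X := by
  rw [qPoly]
  simp [Polynomial.sub_comp]

lemma Phi_eq_comp (f : MvPolynomial (Fin (m+1)) ℂ) :
    Phi i f = (embHom i (Gpoly i f)).comp (qPoly i) := by
  rw [Phi, Gpoly, AlgHom.comp_apply, AlgHom.comp_apply, AlgHom.comp_apply, compHom_apply]
  rfl

lemma emb_natDegree (p : Polynomial (MvPolynomial (Fin m) ℂ)) :
    (embHom i p).natDegree = p.natDegree := by
  rw [embHom]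
  simp only [Polynomial.coe_mapAlgHom]
  exact Polynomial.natDegree_map_eq_of_injective
    (rename_injective _ (fun x y hxy => Fin.succ_injective _
      ((Equiv.swap i 0).injective hxy))) p

lemma emb_ne_zero {p : Polynomial (MvPolynomial (Fin m) ℂ)} (hp : p ≠ 0) :
    embHom i p ≠ 0 := by
  rw [embHom]
  simp only [Polynomial.coe_mapAlgHom]
  intro hc
  exact hp (Polynomial.map_injective _
    (rename_injective _ (fun x y hxy => Fin.succ_injective _
      ((Equiv.swap i 0).injective hxy))) (by simpa using hc))

lemma Phi_natDegree {f : MvPolynomial (Fin (m+1)) ℂ} (hf : f ≠ 0) :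
    (Phi i f).natDegree = degreeOf i f := by
  rw [← Gpoly_natDegree i f, Phi_eq_comp]
  apply le_antisymm
  · calc ((embHom i (Gpoly i f)).comp (qPoly i)).natDegree
        ≤ (embHom i (Gpoly i f)).natDegree * (qPoly i).natDegree := Polynomial.natDegree_comp_le
      _ = (Gpoly i f).natDegree := by rw [emb_natDegree, qPoly_natDegree, mul_one]
  · calc (Gpoly i f).natDegree = (embHom i (Gpoly i f)).natDegree := (emb_natDegree i _).symm
      _ = (((embHom i (Gpoly i f)).comp (qPoly i)).comp (qPoly i)).natDegree := by
          rw [Polynomial.comp_assoc, qPoly_comp, Polynomial.comp_X]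
      _ ≤ ((embHom i (Gpoly i f)).comp (qPoly i)).natDegree * (qPoly i).natDegree :=
          Polynomial.natDegree_comp_le
      _ = ((embHom i (Gpoly i f)).comp (qPoly i)).natDegree := by rw [qPoly_natDegree, mul_one]

lemma Phi_leadingCoeff {f : MvPolynomial (Fin (m+1)) ℂ} (hf : f ≠ 0) :
    (Phi i f).leadingCoeff =
      rename (fun j : Fin m => Equiv.swap i 0 j.succ) ((Gpoly i f).leadingCoeff)
        * (-1) ^ (Gpoly i f).natDegree := by
  rw [Phi_eq_comp, Polynomial.leadingCoeff_comp (by rw [qPoly_natDegree]; omega),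
    qPoly_leadingCoeff, emb_natDegree]
  congr 1
  rw [embHom]
  simp only [Polynomial.coe_mapAlgHom]
  exact Polynomial.leadingCoeff_map_of_injective
    (rename_injective _ (fun x y hxy => Fin.succ_injective _ ((Equiv.swap i 0).injective hxy))) _

lemma Phi_eval (μ : ℂ) (f : MvPolynomial (Fin (m+1)) ℂ) :
    Polynomial.eval (C μ) (Phi i f) = aeval (fun j => X j - C (if j = i then μ else 0)) f := by
  have key : ((Polynomial.aeval (C μ : MvPolynomial (Fin (m+1)) ℂ)).restrictScalars ℂ).comp (Phi i)
      = aeval (fun j => X j - C (if j = i then μ else 0)) := by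
    apply MvPolynomial.algHom_ext
    intro j
    rw [AlgHom.comp_apply, AlgHom.coe_restrictScalars', Phi_X]
    by_cases hj : j = i
    · subst hj
      simp
    · simp [hj]
  have := congrFun (congrArg (fun (F : _ →ₐ[ℂ] _) => (F : MvPolynomial (Fin (m+1)) ℂ → MvPolynomial (Fin (m+1)) ℂ)) key) f
  simp only [AlgHom.comp_apply, AlgHom.coe_restrictScalars'] at this
  rw [← this, Polynomial.coe_aeval_eq_eval]

lemma Phi_ne_zero {f : MvPolynomial (Fin (m+1)) ℂ} (hf : f ≠ 0) : Phi i f ≠ 0 := by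
  intro hc
  have h1 : embHom i (Gpoly i f) = 0 := by
    have := congrArg (fun p => Polynomial.comp p (qPoly i)) hc
    simpa [Phi_eq_comp, Polynomial.comp_assoc, qPoly_comp] using this
  exact emb_ne_zero i (Gpoly_ne_zero i hf) h1

lemma td_neg (p : MvPolynomial (Fin (m+1)) ℂ) : (-p).totalDegree = p.totalDegree := by
  rw [totalDegree, totalDegree, support_neg]

lemma td_C_mul {c : ℂ} (hc : c ≠ 0) (p : MvPolynomial (Fin (m+1)) ℂ) :
    (C c * p).totalDegree = p.totalDegree := by
  refine le_antisymm ?_ ?_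
  · rw [← smul_eq_C_mul]; exact totalDegree_smul_le c p
  · have : p = C c⁻¹ * (C c * p) := by
      rw [← mul_assoc, ← map_mul, inv_mul_cancel₀ hc, map_one, one_mul]
    nth_rewrite 1 [this]
    rw [← smul_eq_C_mul]
    exact totalDegree_smul_le _ _

lemma extraction {m : ℕ} (Λ : Fin (m+1) → ℂ) (hΛ : ∀ j, Λ j ≠ 0) {a : ℂ} (ha : a + 1 ≠ 0)
    (N : Submodule ℂ (MvPolynomial (Fin (m+1)) ℂ))
    (hN : ∀ (i : Fin (m+1)) (k : Fin (m+1) → ℤ), ∀ f ∈ N, omegaNAct Λ a i k f ∈ N)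
    {f : MvPolynomial (Fin (m+1)) ℂ} (hf : f ∈ N) (hf0 : f ≠ 0) {i : Fin (m+1)}
    (hi : degreeOf i f ≠ 0) :
    ∃ g, g ∈ N ∧ g ≠ 0 ∧ g.totalDegree < f.totalDegree := by
  classical
  set d := degreeOf i f with hd
  set Q := (Polynomial.C (X i) - Polynomial.C (C (a+1)) * Polynomial.X) * Phi i f with hQ
  have hevalmem : ∀ mm : ℕ, Q.eval (C (mm : ℂ)) ∈ N := by
    intro mm
    set k : Fin (m+1) → ℤ := fun j => if j = i then (mm : ℤ) else 0 with hk
    have h1 := hN i k f hf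
    have hc : (∏ j, Λ j ^ (k j)) ≠ 0 :=
      Finset.prod_ne_zero_iff.2 fun j _ => zpow_ne_zero _ (hΛ j)
    have h2 : (X i - C ((k i : ℂ) * (a+1))) * aeval (fun j => X j - C ((k j : ℂ))) f ∈ N := by
      have := N.smul_mem (∏ j, Λ j ^ (k j))⁻¹ h1
      rwa [omegaNAct, smul_smul, inv_mul_cancel₀ hc, one_smul] at this
    have he : Q.eval (C (mm : ℂ)) =
        (X i - C ((k i : ℂ) * (a+1))) * aeval (fun j => X j - C ((k j : ℂ))) f := by
      rw [hQ, Polynomial.eval_mul, Polynomial.eval_sub, Polynomial.eval_C, Polynomial.eval_mul,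
        Polynomial.eval_C, Polynomial.eval_X, Phi_eval]
      refine congrArg₂ (· * ·) ?_ ?_
      · rw [hk]; simp only [if_pos rfl]; push_cast; rw [← map_mul]; ring_nf
      · have hfun : (fun j => X j - C ((k j : ℂ)) : Fin (m+1) → MvPolynomial (Fin (m+1)) ℂ)
            = fun j => X j - C (if j = i then (mm : ℂ) else 0) := by
          funext j
          rw [hk]
          by_cases h : j = i
          · simp only [if_pos h, Int.cast_natCast]
          · simp only [if_neg h, Int.cast_zero, map_zero]
        rw [hfun]
    rw [he]
    exact h2
  have hd1 : (Phi i f).natDegree = d := Phi_natDegree i hf0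
  have hgmem : Q.coeff (d + 1) ∈ N := coeff_mem_of_eval_mem N Q hevalmem _
  have hgval : Q.coeff (d + 1) = -(C (a+1) * (Phi i f).leadingCoeff) := by
    rw [hQ, sub_mul, Polynomial.coeff_sub, Polynomial.coeff_C_mul,
      Polynomial.coeff_eq_zero_of_natDegree_lt (by omega), mul_zero, zero_sub,
      mul_assoc, Polynomial.coeff_C_mul, Polynomial.coeff_X_mul, ← hd1, Polynomial.coeff_natDegree]
  have hlcF : (Phi i f).leadingCoeff ≠ 0 := Polynomial.leadingCoeff_ne_zero.mpr (Phi_ne_zero i hf0)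
  have hg0 : Q.coeff (d + 1) ≠ 0 := by
    rw [hgval]
    refine neg_ne_zero.2 (mul_ne_zero ?_ hlcF)
    intro hcc
    exact ha (by simpa using congrArg (coeff 0) hcc)
  -- total degree estimate
  have hdG : (Gpoly i f).natDegree = d := Gpoly_natDegree i f
  have htd1 : ((Phi i f).leadingCoeff).totalDegree + d ≤ f.totalDegree := by
    rw [Phi_leadingCoeff i hf0, hdG]
    have heq : (rename (fun j : Fin m => Equiv.swap i 0 j.succ) ((Gpoly i f).leadingCoeff)
        * (-1) ^ d).totalDegree
        = (rename (fun j : Fin m => Equiv.swap i 0 j.succ) ((Gpoly i f).leadingCoeff)).totalDegree := by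
      rcases Nat.even_or_odd d with hpar | hpar
      · rw [hpar.neg_one_pow, mul_one]
      · rw [hpar.neg_one_pow, mul_neg_one, td_neg]
    rw [heq]
    have h3 : (rename (fun j : Fin m => Equiv.swap i 0 j.succ) ((Gpoly i f).leadingCoeff)).totalDegree
        ≤ ((Gpoly i f).leadingCoeff).totalDegree := totalDegree_rename_le _ _
    have hlcG : ((finSuccEquiv ℂ m) (swapHom i f)).coeff d ≠ 0 := by
      have : (Gpoly i f).coeff d ≠ 0 := by
        rw [← hdG, Polynomial.coeff_natDegree]
        exact Polynomial.leadingCoeff_ne_zero.mpr (Gpoly_ne_zero i hf0)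
      exact this
    have h4 := totalDegree_coeff_finSuccEquiv_add_le (swapHom i f) d hlcG
    have h5 : (swapHom i f).totalDegree ≤ f.totalDegree := by
      rw [swapHom]; exact totalDegree_rename_le _ _
    have h6 : (Gpoly i f).leadingCoeff = ((finSuccEquiv ℂ m) (swapHom i f)).coeff d := by
      rw [Polynomial.leadingCoeff, hdG]; rfl
    rw [h6] at h3
    rw [h6]
    omega
  refine ⟨Q.coeff (d + 1), hgmem, hg0, ?_⟩
  rw [hgval, td_neg, td_C_mul ha]
  omega

lemma one_mem_of_ne_bot {m : ℕ} (Λ : Fin (m+1) → ℂ) (hΛ : ∀ j, Λ j ≠ 0) {a : ℂ}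
    (ha : a + 1 ≠ 0) (N : Submodule ℂ (MvPolynomial (Fin (m+1)) ℂ))
    (hN : ∀ (i : Fin (m+1)) (k : Fin (m+1) → ℤ), ∀ f ∈ N, omegaNAct Λ a i k f ∈ N)
    {f : MvPolynomial (Fin (m+1)) ℂ} (hf : f ∈ N) (hf0 : f ≠ 0) :
    (1 : MvPolynomial (Fin (m+1)) ℂ) ∈ N := by
  classical
  have claim : ∀ D : ℕ, ∀ f : MvPolynomial (Fin (m+1)) ℂ, f ∈ N → f ≠ 0 →
      f.totalDegree ≤ D → (1 : MvPolynomial (Fin (m+1)) ℂ) ∈ N := by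
    intro D
    induction D with
    | zero =>
      intro f hfN hf0 htd
      have h0 : f.totalDegree = 0 := le_antisymm htd (Nat.zero_le _)
      have hfC : f = C (coeff 0 f) := by
        ext mexp
        rcases eq_or_ne mexp 0 with h | h
        · subst h; simp [coeff_C]
        · rw [coeff_C, if_neg (fun hc => h hc.symm)]
          apply coeff_eq_zero_of_totalDegree_lt
          rw [h0]
          obtain ⟨x, hx⟩ := Finsupp.ne_iff.mp h
          have hx' : mexp x ≠ 0 := by simpa using hx
          have hmem : x ∈ mexp.support := Finsupp.mem_support_iff.mpr hx'
          have h2 := Finset.single_le_sum (f := fun i => mexp i) (fun _ _ => Nat.zero_le _) hmem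
          exact lt_of_lt_of_le (Nat.pos_of_ne_zero hx') (by simpa using h2)
      have hc0 : coeff 0 f ≠ 0 := fun hc => hf0 (by rw [hfC, hc, map_zero])
      have h1 : ((coeff 0 f)⁻¹ • f : MvPolynomial (Fin (m+1)) ℂ) = 1 := by
        nth_rewrite 2 [hfC]
        rw [smul_eq_C_mul, ← map_mul, inv_mul_cancel₀ hc0, map_one]
      exact h1 ▸ N.smul_mem _ hfN
    | succ D ih =>
      intro f hfN hf0 htd
      by_cases h0 : f.totalDegree ≤ D
      · exact ih f hfN hf0 h0
      · have hi : ∃ i, degreeOf i f ≠ 0 := by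
          by_contra hall
          push_neg at hall
          have htd0 : f.totalDegree = 0 := by
            rw [totalDegree_eq_zero_iff]
            intro mm hmm x
            have h1 := monomial_le_degreeOf x hmm
            have h2 := hall x
            omega
          omega
        obtain ⟨i, hi⟩ := hi
        obtain ⟨g, hgN, hg0, hgtd⟩ := extraction Λ hΛ ha N hN hfN hf0 hi
        exact ih g hgN hg0 (by omega)
  exact claim f.totalDegree f hf hf0 le_rfl

/-- the `W_n`-module `Ω(Λ_n, a)` is simple iff `a ≠ -1`. -/
theorem omegaN_simple_iff {n : ℕ} (hn : 0 < n) (Λ : Fin n → ℂ) (hΛ : ∀ j, Λ j ≠ 0)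
    (a : ℂ) :
    (∀ N : Submodule ℂ (MvPolynomial (Fin n) ℂ),
        (∀ (i : Fin n) (k : Fin n → ℤ), ∀ f ∈ N, omegaNAct Λ a i k f ∈ N) →
        N = ⊥ ∨ N = ⊤)
      ↔ a ≠ -1 := by
  constructor
  · intro hsimple ha
    set A := (aeval (fun _ : Fin n => (0 : ℂ)) : MvPolynomial (Fin n) ℂ →ₐ[ℂ] ℂ) with hA
    set N := LinearMap.ker A.toLinearMap with hNdef
    have hinv : ∀ (i : Fin n) (k : Fin n → ℤ), ∀ f ∈ N, omegaNAct Λ a i k f ∈ N := by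
      intro i k f _
      rw [hNdef, LinearMap.mem_ker, AlgHom.toLinearMap_apply, omegaNAct, ha]
      simp [hA]
    rcases hsimple N hinv with h | h
    · have hX : X (⟨0, hn⟩ : Fin n) ∈ N := by
        rw [hNdef, LinearMap.mem_ker, AlgHom.toLinearMap_apply, hA]
        simp
      rw [h, Submodule.mem_bot] at hX
      exact MvPolynomial.X_ne_zero _ hX
    · have h1 : (1 : MvPolynomial (Fin n) ℂ) ∈ N := h ▸ Submodule.mem_top
      rw [hNdef, LinearMap.mem_ker, AlgHom.toLinearMap_apply, map_one] at h1
      exact one_ne_zero h1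
  · intro ha N hNinv
    by_cases hbot : N = ⊥
    · left; exact hbot
    right
    obtain ⟨f0, hf0N, hf00⟩ := Submodule.exists_mem_ne_zero_of_ne_bot hbot
    obtain ⟨mp, rfl⟩ : ∃ mp, n = mp + 1 := ⟨n - 1, by omega⟩
    have ha' : a + 1 ≠ 0 := fun hc => ha (eq_neg_of_add_eq_zero_left hc)
    have hone : (1 : MvPolynomial (Fin (mp+1)) ℂ) ∈ N :=
      one_mem_of_ne_bot Λ hΛ ha' N hNinv hf0N hf00
    have hXmul : ∀ (p : MvPolynomial (Fin (mp+1)) ℂ) (i : Fin (mp+1)), p ∈ N → X i * p ∈ N := by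
      intro p i hp
      have h1 := hNinv i (fun _ => 0) p hp
      rw [omegaNAct] at h1
      simpa using h1
    rw [Submodule.eq_top_iff']
    intro f
    induction f using MvPolynomial.induction_on with
    | C c =>
      have := N.smul_mem c hone
      rwa [smul_eq_C_mul, mul_one] at this
    | add p q hp hq => exact N.add_mem hp hq
    | mul_X p i hp =>
      have := hXmul p i hp
      rwa [mul_comm] at this
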